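/- Every computable set I ⊆ ℕ (with I infinite) is a subsequence set for 1-genericity: for every 1-generic G, the subsequence G_I is 1-generic. -/

import Mathlib

open Classical in
/-- Characteristic sequence of a set of naturals. -/
noncomputable def chi (G : Set ℕ) : ℕ → Bool := fun n => decide (n ∈ G)

/-- Initial segment of length `k` of the characteristic sequence of `G`. -/
noncomputable def seg (G : Set ℕ) (k : ℕ) : List Bool := (List.range k).map (chi G)

/-- `G` is 1-generic: for every c.e. set `W` of binary strings, some initial
segment of `G` lies in `W` or has no extension in `W`. -/
def OneGeneric (G : Set ℕ) : Prop :=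
  ∀ W : Set (List Bool), REPred (· ∈ W) →
    ∃ k, seg G k ∈ W ∨ ∀ τ : List Bool, seg G k <+: τ → τ ∉ W

/-- A set of strings is dense if every string has an extension in it. -/
def DenseStrings (W : Set (List Bool)) : Prop := ∀ σ : List Bool, ∃ τ ∈ W, σ <+: τ

/-- `G` is weak-1-generic: `G` meets every dense c.e. set of strings. -/
def WeakOneGeneric (G : Set ℕ) : Prop :=
  ∀ W : Set (List Bool), REPred (· ∈ W) → DenseStrings W → ∃ k, seg G k ∈ W

/-- Principal function of `I` (increasing enumeration). -/
noncomputable def princ (I : Set ℕ) : ℕ → ℕ := Nat.nth (· ∈ I)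

/-- `I` is hyperimmune: infinite and its principal function is majorized by
no computable function. -/
def Hyperimmune (I : Set ℕ) : Prop :=
  I.Infinite ∧ ∀ f : ℕ → ℕ, Computable f → ∃ n, f n < princ I n

/-- The `I`-subsequence `A_I` of `A`, as a set: `A_I(n) = A(P_I(n))`. -/
def subseq (A I : Set ℕ) : Set ℕ := {n | princ I n ∈ A}

/-- The `I`-subsequence of an infinite binary sequence. -/
noncomputable def subseqFun (X : ℕ → Bool) (I : Set ℕ) : ℕ → Bool :=
  fun n => X (princ I n)

def ComputableSet (I : Set ℕ) : Prop := ComputablePred (· ∈ I)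

/-- Partial functions recursive in an oracle `O`. -/
inductive RecursiveInFn (O : ℕ →. ℕ) : (ℕ →. ℕ) → Prop
  | zero : RecursiveInFn O (pure 0)
  | succ : RecursiveInFn O ↑Nat.succ
  | left : RecursiveInFn O ↑fun n : ℕ => n.unpair.1
  | right : RecursiveInFn O ↑fun n : ℕ => n.unpair.2
  | oracle : RecursiveInFn O O
  | pair {f g} : RecursiveInFn O f → RecursiveInFn O g →
      RecursiveInFn O fun n => Nat.pair <$> f n <*> g n
  | comp {f g} : RecursiveInFn O f → RecursiveInFn O g →
      RecursiveInFn O fun n => g n >>= f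
  | prec {f g} : RecursiveInFn O f → RecursiveInFn O g →
      RecursiveInFn O (Nat.unpaired fun a n =>
        n.rec (f a) fun y IH => do { let i ← IH; g (Nat.pair a (Nat.pair y i)) })
  | rfind {f} : RecursiveInFn O f →
      RecursiveInFn O fun a => Nat.rfind fun n => (fun m => m = 0) <$> f (Nat.pair a n)

open Classical in
noncomputable def charFun (A : Set ℕ) : ℕ →. ℕ :=
  fun n => Part.some (if n ∈ A then 1 else 0)

/-- `A` Turing-computes `B`. -/
def TuringComputes (A B : Set ℕ) : Prop := RecursiveInFn (charFun A) (charFun B)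

/-- The halting problem `∅′`. -/
def HaltingProblem : Set ℕ :=
  {n | ((Denumerable.ofNat Nat.Partrec.Code n).eval n).Dom}

/-- `I` is wild. -/
def Wild (I : Set ℕ) : Prop :=
  ¬ComputableSet I ∧ ∃ f : ℕ → ℕ, Computable f ∧ StrictMono f ∧
    (∀ n, (I ∩ Set.Ioo (f n) (f (n + 1))).Nonempty) ∧
    ¬Computable fun n => (I ∩ Set.Ioo (f n) (f (n + 1))).ncard

/-- `I` is tame. -/
def Tame (I : Set ℕ) : Prop :=
  ¬ComputableSet I ∧ ∃ f : ℕ → ℕ, Computable f ∧ StrictMono f ∧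
    (∀ n, (I ∩ Set.Ioo (f n) (f (n + 1))).Nonempty) ∧
    Computable fun n => (I ∩ Set.Ioo (f n) (f (n + 1))).ncard

/-- The string `ρ` meets `S`: some initial segment of `ρ` is in `S`. -/
def MeetsStr (ρ : List Bool) (S : Set (List Bool)) : Prop := ∃ σ ∈ S, σ <+: ρ

/-- The sequence `X` meets `S`: some initial segment of `X` is in `S`. -/
def MeetsSeq (X : ℕ → Bool) (S : Set (List Bool)) : Prop :=
  ∃ k, (List.range k).map X ∈ S

/-- `l, t` are suitable for `S`. -/
def SuitableFor (S : Set (List Bool)) (l : ℕ → ℕ) (t : ℕ → List Bool) : Prop :=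
  l 0 = 0 ∧ (∀ n, l (n + 1) = l n + (t n).length) ∧
    ∀ (X : ℕ → Bool) (n m : ℕ), m ≤ l n →
      MeetsStr ((List.range m).map X ++ t n) S

/-- The collection `D` has property `(*)`. -/
def HasStar (D : ℕ → Set (List Bool)) : Prop :=
  ∀ i, ∃ l t, SuitableFor (D i) l t ∧ ∀ n, ∃ j, D j =
    {s | ∃ (σ τ ρ : List Bool) (m : ℕ), m > n ∧ σ.length = l (2 * m) ∧
      τ = t (2 * m) ∧ ρ = t (2 * m + 1) ∧ s = σ ++ τ ++ ρ}

/-- The `e`-th c.e. set of binary strings. -/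
def ceSet (e : ℕ) : Set (List Bool) :=
  {σ | ((Denumerable.ofNat Nat.Partrec.Code e).eval (Encodable.encode σ)).Dom}

open Classical in
/-- The `I`-subsequence of a finite string. -/
noncomputable def subseqStr (τ : List Bool) (I : Set ℕ) : List Bool :=
  (List.range τ.length).filterMap fun k => if k ∈ I then τ[k]? else none


section SubseqAux
open Classical

private lemma filterMap_aux' (I : Set ℕ) (X : ℕ → Bool) :
    ∀ (k : ℕ) (f : ℕ → Option Bool), (∀ j < k, f j = if j ∈ I then some (X j) else none) →
    (List.range k).filterMap f
      = (List.range (Nat.count (· ∈ I) k)).map fun n => X (Nat.nth (· ∈ I) n)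
  | 0, f, hf => by simp
  | k+1, f, hf => by
    rw [List.range_succ, List.filterMap_append,
        filterMap_aux' I X k f (fun j hj => hf j (hj.trans (Nat.lt_succ_self k)))]
    by_cases hk : k ∈ I
    · have h1 : Nat.count (· ∈ I) (k+1) = Nat.count (· ∈ I) k + 1 := by
        rw [Nat.count_succ, if_pos hk]
      rw [h1, List.range_succ, List.map_append]
      simp [hf k (Nat.lt_succ_self k), hk, Nat.nth_count hk]
    · have h1 : Nat.count (· ∈ I) (k+1) = Nat.count (· ∈ I) k := by
        rw [Nat.count_succ, if_neg hk, Nat.add_zero]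
      simp [h1, hf k (Nat.lt_succ_self k), hk]

private lemma subseqStr_range_map' (I : Set ℕ) (X : ℕ → Bool) (k : ℕ) :
    subseqStr ((List.range k).map X) I
      = (List.range (Nat.count (· ∈ I) k)).map fun n => X (Nat.nth (· ∈ I) n) := by
  unfold subseqStr
  rw [List.length_map, List.length_range]
  refine filterMap_aux' I X k _ (fun j hj => ?_)
  by_cases h : j ∈ I <;> simp [h, hj]

private def FbAux (c : ℕ → Bool) (τ : List Bool) (n : ℕ) : List Bool :=
  Nat.rec [] (fun y IH => IH ++ (bif c y then [τ.getD y false] else [])) n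

private lemma FbAux_eq (I : Set ℕ) (c : ℕ → Bool) (hc : ∀ n, c n = true ↔ n ∈ I)
    (τ : List Bool) : ∀ n, n ≤ τ.length →
    FbAux c τ n = (List.range n).filterMap fun k => if k ∈ I then τ[k]? else none
  | 0, _ => by simp [FbAux]
  | n+1, h => by
    have ih := FbAux_eq I c hc τ n (Nat.le_of_succ_le h)
    have hn : n < τ.length := h
    have hg : τ[n]? = some (τ.getD n false) := by
      rw [List.getD_eq_getElem τ _ hn, List.getElem?_eq_getElem hn]
    show FbAux c τ n ++ _ = _
    rw [List.range_succ, List.filterMap_append, ← ih]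
    by_cases hmem : n ∈ I
    · rw [(hc n).mpr hmem]
      simp only [List.filterMap_cons, List.filterMap_nil, if_pos hmem, hg, cond_true]
    · have hcf : c n = false := by
        rcases Bool.eq_false_or_eq_true (c n) with h' | h'
        · exact absurd ((hc n).mp h') hmem
        · exact h'
      rw [hcf]
      simp only [List.filterMap_cons, List.filterMap_nil, if_neg hmem, cond_false,
        List.append_nil]

private lemma computable_subseqStr' (I : Set ℕ) (hI : ComputableSet I) :
    Computable fun τ : List Bool => subseqStr τ I := by
  obtain ⟨inst, hc⟩ := hI
  set c : ℕ → Bool := fun n => @decide (n ∈ I) (inst n) with hcdef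
  have hciff : ∀ n, c n = true ↔ n ∈ I := fun n => by simp [hcdef]
  have hh : Computable (fun x : List Bool × ℕ × List Bool =>
      x.2.2 ++ (bif c x.2.1 then [x.1.getD x.2.1 false] else [])) :=
    Computable.list_append.comp (Computable.snd.comp Computable.snd)
      (Computable.cond (hc.comp (Computable.fst.comp Computable.snd))
        (Computable.list_cons.comp
          ((Primrec.list_getD false).to_comp.comp Computable.fst
            (Computable.fst.comp Computable.snd))
          (Computable.const []))
        (Computable.const []))
  have hFb : Computable fun τ : List Bool => FbAux c τ τ.length :=
    Computable.nat_rec Computable.list_length (Computable.const []) hh.to₂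
  have heq : (fun τ : List Bool => subseqStr τ I) = fun τ => FbAux c τ τ.length := by
    funext τ
    rw [FbAux_eq I c hciff τ τ.length le_rfl]
    rfl
  rw [heq]
  exact hFb

end SubseqAux

theorem computable_subsequenceSet_for_oneGenericity (I : Set ℕ) (hinf : I.Infinite)
    (hI : ComputableSet I) (G : Set ℕ) (hG : OneGeneric G) :
    OneGeneric (subseq G I) := by
  classical
  intro W hW
  have hpinf : (setOf fun n => n ∈ I).Infinite := hinf
  have hchi : ∀ n, chi (subseq G I) n = chi G (Nat.nth (· ∈ I) n) := fun n => by
    unfold chi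
    rw [decide_eq_decide]
    exact Iff.rfl
  have hsegsub : ∀ k, subseqStr (seg G k) I = seg (subseq G I) (Nat.count (· ∈ I) k) := by
    intro k
    show subseqStr ((List.range k).map (chi G)) I = _
    rw [subseqStr_range_map']
    exact List.map_congr_left fun n _ => (hchi n).symm
  have hW' : REPred fun σ : List Bool => subseqStr σ I ∈ W :=
    Partrec.comp hW (computable_subseqStr' I hI)
  obtain ⟨k, hk⟩ := hG {σ : List Bool | subseqStr σ I ∈ W} hW'
  set m := Nat.count (· ∈ I) k with hm
  refine ⟨m, ?_⟩
  rcases hk with hk | hk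
  · left
    rw [← hsegsub k]
    exact hk
  · right
    intro τ' hpre hWτ'
    have hlen : m ≤ τ'.length := by
      have := hpre.length_le
      simpa [seg] using this
    set L := Nat.nth (· ∈ I) τ'.length with hL
    have hkL : k ≤ L := (Nat.count_le_iff_le_nth hpinf).mp hlen
    have hcountL : Nat.count (· ∈ I) L = τ'.length := Nat.count_nth_of_infinite hpinf _
    set X : ℕ → Bool :=
      fun j => if j ∈ I then τ'.getD (Nat.count (· ∈ I) j) false else chi G j with hX
    set τ : List Bool := (List.range L).map X with hτ
    have hgetD : ∀ i < m, τ'.getD i false = chi (subseq G I) i := by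
      intro i hi
      obtain ⟨r, hr⟩ := hpre
      rw [← hr, List.getD_append _ _ _ _ (by simpa [seg] using hi)]
      have hlt : i < (seg (subseq G I) m).length := by simpa [seg] using hi
      rw [List.getD_eq_getElem _ _ hlt]
      simp [seg]
    have hXG : ∀ j < k, X j = chi G j := by
      intro j hj
      simp only [hX]
      by_cases hjI : j ∈ I
      · rw [if_pos hjI]
        have hcj : Nat.count (· ∈ I) j < m :=
          lt_of_lt_of_le (by rw [Nat.count_succ, if_pos hjI]; omega)
            (Nat.count_monotone _ hj)
        rw [hgetD _ hcj, hchi, Nat.nth_count hjI]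
      · rw [if_neg hjI]
    have hprefix : seg G k <+: τ := by
      have htake : τ.take k = seg G k := by
        rw [hτ, ← List.map_take, List.take_range, min_eq_left hkL]
        exact List.map_congr_left fun j hj => hXG j (List.mem_range.mp hj)
      rw [← htake]
      exact List.take_prefix _ _
    have hsub : subseqStr τ I = τ' := by
      rw [hτ, subseqStr_range_map', hcountL]
      apply List.ext_getElem (by simp)
      intro i h1 h2
      simp only [List.getElem_map, List.getElem_range]
      simp only [hX]
      simp only [if_pos (Nat.nth_mem_of_infinite hpinf i),
        Nat.count_nth_of_infinite hpinf i, List.getD_eq_getElem _ _ h2]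
    exact hk τ hprefix (by rw [Set.mem_setOf_eq, hsub]; exact hWτ')
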